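/- Let A, d > 0 (units with c = 1) and for each positive integer m define ω_m = (1/d)·(mπ + i·log(4m²π²/(A d²))). Then sin( −i·Log(4ω_m²/A) + (ω_m − A/(2ω_m))·d ) → 0 as m → ∞, where Log denotes the principal branch of the complex logarithm; i.e., the ω_m are asymptotic roots of the large-frequency natural mode equation of a single dispersive slab. -/

import Mathlib

open Complex Real Filter

/-- `L A d m = log(4 m² π² / (A d²))`. -/
noncomputable def slabL (A d : ℝ) (m : ℕ) : ℝ :=
  Real.log (4 * (m : ℝ) ^ 2 * Real.pi ^ 2 / (A * d ^ 2))

/-- `z A d m = mπ + i L`. -/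
noncomputable def slabZ (A d : ℝ) (m : ℕ) : ℂ :=
  (m : ℂ) * (Real.pi : ℂ) + Complex.I * (slabL A d m : ℂ)

/-- `w A d m = z / (mπ)`. -/
noncomputable def slabW (A d : ℝ) (m : ℕ) : ℂ :=
  slabZ A d m / ((m : ℂ) * (Real.pi : ℂ))

lemma slabZ_ne_zero (A d : ℝ) {m : ℕ} (hm : 1 ≤ m) : slabZ A d m ≠ 0 := by
  intro h
  have hre : (slabZ A d m).re = (m : ℝ) * Real.pi := by
    simp [slabZ]
  rw [h] at hre
  simp only [Complex.zero_re] at hre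
  have hmpos : (0 : ℝ) < (m : ℝ) * Real.pi := by
    have : (1 : ℝ) ≤ (m : ℝ) := by exact_mod_cast hm
    nlinarith [Real.pi_pos]
  linarith [hre ▸ hmpos]

lemma slabW_ne_zero (A d : ℝ) {m : ℕ} (hm : 1 ≤ m) : slabW A d m ≠ 0 := by
  have hm0 : ((m : ℂ) * (Real.pi : ℂ)) ≠ 0 := by
    have h1 : (m : ℂ) ≠ 0 := by exact_mod_cast Nat.cast_ne_zero.mpr (by omega)
    have h2 : ((Real.pi : ℝ) : ℂ) ≠ 0 := by exact_mod_cast Real.pi_ne_zero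
    exact mul_ne_zero h1 h2
  exact div_ne_zero (slabZ_ne_zero A d hm) hm0

/-- Key algebraic identity: for `m ≥ 1`, the natural-mode expression equals
`mπ + (-i log(w²) - A d²/(2z))`. -/
lemma slab_key_id (A d : ℝ) (hA : 0 < A) (hd : 0 < d) (m : ℕ) (hm : 1 ≤ m)
    (ω : ℂ) (hω : ω = (1 / (d : ℂ)) * slabZ A d m) :
    -Complex.I * Complex.log (4 * ω ^ 2 / (A : ℂ)) + (ω - (A : ℂ) / (2 * ω)) * (d : ℂ)
      = (m : ℂ) * (Real.pi : ℂ) +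
        (-Complex.I * Complex.log ((slabW A d m) ^ 2)
          - (A : ℂ) * (d : ℂ) ^ 2 / (2 * slabZ A d m)) := by
  have hd0 : (d : ℂ) ≠ 0 := by exact_mod_cast hd.ne'
  have hA0 : (A : ℂ) ≠ 0 := by exact_mod_cast hA.ne'
  have hmC : (m : ℂ) ≠ 0 := Nat.cast_ne_zero.mpr (by omega)
  have hπC : ((Real.pi : ℝ) : ℂ) ≠ 0 := by exact_mod_cast Real.pi_ne_zero
  have hz0 : slabZ A d m ≠ 0 := slabZ_ne_zero A d hm
  have hw0 : slabW A d m ≠ 0 := slabW_ne_zero A d hm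
  have hω0 : ω ≠ 0 := by
    rw [hω]; exact mul_ne_zero (one_div_ne_zero hd0) hz0
  have hmR : (0 : ℝ) < (m : ℝ) := by exact_mod_cast (by omega : 0 < m)
  have hx : (0 : ℝ) < 4 * (m : ℝ) ^ 2 * Real.pi ^ 2 / (A * d ^ 2) := by
    positivity
  have h4 : 4 * ω ^ 2 / (A : ℂ)
      = ((4 * (m : ℝ) ^ 2 * Real.pi ^ 2 / (A * d ^ 2) : ℝ) : ℂ) * (slabW A d m) ^ 2 := by
    rw [hω, slabW]
    push_cast
    field_simp
  have hlog : Complex.log (4 * ω ^ 2 / (A : ℂ))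
      = ((slabL A d m : ℝ) : ℂ) + Complex.log ((slabW A d m) ^ 2) := by
    rw [h4, Complex.log_ofReal_mul hx (pow_ne_zero 2 hw0)]
    rfl
  have hz1 : (m : ℂ) * (Real.pi : ℂ) + Complex.I * (slabL A d m : ℂ) ≠ 0 := hz0
  rw [hlog, hω, slabZ]
  field_simp
  ring

/-- The real sequence `L m / (mπ)` tends to `0`. -/
lemma slabL_div_tendsto (A d : ℝ) (hA : 0 < A) (hd : 0 < d) :
    Tendsto (fun m : ℕ => slabL A d m / ((m : ℝ) * Real.pi)) atTop (nhds 0) := by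
  have hc : Tendsto (fun m : ℕ =>
      (Real.log (4 * Real.pi ^ 2 / (A * d ^ 2)) / Real.pi) / (m : ℝ) +
        (2 / Real.pi) * (Real.log (m : ℝ) / (m : ℝ))) atTop (nhds 0) := by
    have h1 : Tendsto (fun m : ℕ =>
        (Real.log (4 * Real.pi ^ 2 / (A * d ^ 2)) / Real.pi) / (m : ℝ)) atTop (nhds 0) :=
      tendsto_const_div_atTop_nhds_zero_nat _
    have h2 : Tendsto (fun m : ℕ => Real.log (m : ℝ) / (m : ℝ)) atTop (nhds 0) :=
      (Real.isLittleO_log_id_atTop.tendsto_div_nhds_zero).comp tendsto_natCast_atTop_atTop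
    have := h1.add ((h2.const_mul (2 / Real.pi)))
    simpa using this
  refine hc.congr' ?_
  filter_upwards [eventually_ge_atTop 1] with m hm
  have hmR : (0 : ℝ) < (m : ℝ) := by exact_mod_cast (by omega : 0 < m)
  have hsplit : slabL A d m = Real.log (4 * Real.pi ^ 2 / (A * d ^ 2)) + 2 * Real.log (m : ℝ) := by
    rw [slabL]
    have : 4 * (m : ℝ) ^ 2 * Real.pi ^ 2 / (A * d ^ 2)
        = (4 * Real.pi ^ 2 / (A * d ^ 2)) * (m : ℝ) ^ 2 := by ring
    rw [this, Real.log_mul (by positivity) (by positivity), Real.log_pow]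
    push_cast; ring
  rw [hsplit]
  have hm0 : ((m : ℝ)) ≠ 0 := hmR.ne'
  have hπ0 : Real.pi ≠ 0 := Real.pi_ne_zero
  rw [eq_div_iff (mul_ne_zero hm0 hπ0)]
  field_simp

/-- `w m → 1`. -/
lemma slabW_tendsto (A d : ℝ) (hA : 0 < A) (hd : 0 < d) :
    Tendsto (slabW A d) atTop (nhds 1) := by
  have h0 : Tendsto (fun m : ℕ =>
      (1 : ℂ) + Complex.I * ((slabL A d m / ((m : ℝ) * Real.pi) : ℝ) : ℂ)) atTop (nhds 1) := by
    have hr : Tendsto (fun m : ℕ => ((slabL A d m / ((m : ℝ) * Real.pi) : ℝ) : ℂ))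
        atTop (nhds 0) := by
      have := (Complex.continuous_ofReal.tendsto 0).comp (slabL_div_tendsto A d hA hd)
      exact this
    have := (tendsto_const_nhds (x := (1 : ℂ)) (f := atTop)).add
      ((tendsto_const_nhds (x := Complex.I) (f := atTop)).mul hr)
    simpa using this
  refine h0.congr' ?_
  filter_upwards [eventually_ge_atTop 1] with m hm
  have hmC : (m : ℂ) ≠ 0 := Nat.cast_ne_zero.mpr (by omega)
  have hπC : ((Real.pi : ℝ) : ℂ) ≠ 0 := by exact_mod_cast Real.pi_ne_zero
  rw [slabW, slabZ]
  push_cast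
  field_simp

/-- The correction term tends to `0`. -/
lemma slabF_tendsto (A d : ℝ) (hA : 0 < A) (hd : 0 < d) :
    Tendsto (fun m : ℕ =>
      -Complex.I * Complex.log ((slabW A d m) ^ 2)
        - (A : ℂ) * (d : ℂ) ^ 2 / (2 * slabZ A d m)) atTop (nhds 0) := by
  have h1 : Tendsto (fun m : ℕ => -Complex.I * Complex.log ((slabW A d m) ^ 2))
      atTop (nhds 0) := by
    have hsq : Tendsto (fun m : ℕ => (slabW A d m) ^ 2) atTop (nhds 1) := by
      have := (slabW_tendsto A d hA hd).mul (slabW_tendsto A d hA hd)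
      simpa [sq] using this
    have hlog : Tendsto (fun m : ℕ => Complex.log ((slabW A d m) ^ 2)) atTop (nhds 0) := by
      have hcont : ContinuousAt Complex.log 1 :=
        continuousAt_clog (by simp [Complex.slitPlane])
      have := hcont.tendsto.comp hsq
      simpa using (show Tendsto (fun m : ℕ => Complex.log ((slabW A d m) ^ 2)) atTop
        (nhds (Complex.log 1)) from this)
    have := (tendsto_const_nhds (x := -Complex.I) (f := atTop)).mul hlog
    simpa using this
  have h2 : Tendsto (fun m : ℕ => (A : ℂ) * (d : ℂ) ^ 2 / (2 * slabZ A d m))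
      atTop (nhds 0) := by
    apply squeeze_zero_norm' (a := fun m : ℕ => (A * d ^ 2 / (2 * Real.pi)) / (m : ℝ))
    · filter_upwards [eventually_ge_atTop 1] with m hm
      have hz0 : slabZ A d m ≠ 0 := slabZ_ne_zero A d hm
      have hmR : (0 : ℝ) < (m : ℝ) := by exact_mod_cast (by omega : 0 < m)
      have hzlb : (m : ℝ) * Real.pi ≤ ‖slabZ A d m‖ := by
        have : |(slabZ A d m).re| ≤ ‖slabZ A d m‖ := Complex.abs_re_le_norm _
        have hre : (slabZ A d m).re = (m : ℝ) * Real.pi := by simp [slabZ]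
        rw [hre] at this
        exact le_trans (le_abs_self _) this
      have hnorm : ‖(A : ℂ) * (d : ℂ) ^ 2 / (2 * slabZ A d m)‖
          = A * d ^ 2 / (2 * ‖slabZ A d m‖) := by
        simp [norm_div, norm_mul, Complex.norm_real, norm_pow,
          abs_of_pos hA, abs_of_pos hd]
      rw [hnorm]
      have haz : (0 : ℝ) < ‖slabZ A d m‖ := norm_pos_iff.mpr hz0
      have hπ := Real.pi_pos
      rw [div_le_div_iff₀ (by positivity) hmR]
      have hc0 : (0 : ℝ) ≤ A * d ^ 2 / (2 * Real.pi) := by positivity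
      calc A * d ^ 2 * (m : ℝ)
          = A * d ^ 2 / (2 * Real.pi) * (2 * ((m : ℝ) * Real.pi)) := by
            field_simp
        _ ≤ A * d ^ 2 / (2 * Real.pi) * (2 * ‖slabZ A d m‖) := by
            apply mul_le_mul_of_nonneg_left (by linarith) hc0
    · exact tendsto_const_div_atTop_nhds_zero_nat _
  have := h1.sub h2
  simpa using this

theorem asymptotic_large_frequency_natural_modes
    (A d : ℝ) (hA : 0 < A) (hd : 0 < d)
    (ω : ℕ → ℂ)
    (hω : ∀ m : ℕ, ω m = (1 / (d : ℂ)) *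
      ((m : ℂ) * (Real.pi : ℂ) +
        Complex.I * (Real.log (4 * (m : ℝ) ^ 2 * Real.pi ^ 2 / (A * d ^ 2)) : ℂ))) :
    Tendsto
      (fun m : ℕ => Complex.sin
        (-Complex.I * Complex.log (4 * (ω m) ^ 2 / (A : ℂ)) +
          (ω m - (A : ℂ) / (2 * ω m)) * (d : ℂ)))
      atTop (nhds 0) := by
  set T : ℕ → ℂ := fun m =>
    -Complex.I * Complex.log (4 * (ω m) ^ 2 / (A : ℂ)) +
      (ω m - (A : ℂ) / (2 * ω m)) * (d : ℂ) with hT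
  have hg : Tendsto (fun m : ℕ => T m - (m : ℂ) * (Real.pi : ℂ)) atTop (nhds 0) := by
    refine (slabF_tendsto A d hA hd).congr' ?_
    filter_upwards [eventually_ge_atTop 1] with m hm
    have hωm : ω m = (1 / (d : ℂ)) * slabZ A d m := by
      rw [hω m]; rfl
    have := slab_key_id A d hA hd m hm (ω m) hωm
    simp only [hT, this]
    ring
  apply squeeze_zero_norm (a := fun m : ℕ => ‖Complex.sin (T m - (m : ℂ) * (Real.pi : ℂ))‖)
  · intro m
    have hsplit : T m = (m : ℂ) * (Real.pi : ℂ) + (T m - (m : ℂ) * (Real.pi : ℂ)) := by ring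
    show ‖Complex.sin (T m)‖ ≤ ‖Complex.sin (T m - (m : ℂ) * (Real.pi : ℂ))‖
    conv_lhs => rw [hsplit]
    rw [Complex.sin_add, Complex.sin_nat_mul_pi, zero_mul, zero_add, norm_mul]
    have hcos : ‖Complex.cos ((m : ℂ) * (Real.pi : ℂ))‖ ≤ 1 := by
      have : Complex.cos ((m : ℂ) * (Real.pi : ℂ)) = ((Real.cos ((m : ℝ) * Real.pi) : ℝ) : ℂ) := by
        rw [Complex.ofReal_cos]; push_cast; ring_nf
      rw [this, Complex.norm_real, Real.norm_eq_abs]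
      exact Real.abs_cos_le_one _
    calc ‖Complex.cos ((m : ℂ) * (Real.pi : ℂ))‖ * ‖Complex.sin (T m - (m : ℂ) * (Real.pi : ℂ))‖
        ≤ 1 * ‖Complex.sin (T m - (m : ℂ) * (Real.pi : ℂ))‖ :=
          mul_le_mul_of_nonneg_right hcos (norm_nonneg _)
      _ = ‖Complex.sin (T m - (m : ℂ) * (Real.pi : ℂ))‖ := one_mul _
  · have := ((Complex.continuous_sin.tendsto 0).comp hg).norm
    simpa using this
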